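/- Let A ∈ ℝ^{k×k} be invertible, B ∈ ℝ^{k×1}, C ∈ ℝ^{1×k}, M > 0, D ∈ ℝ, and ρ > 0. Suppose the pair (C, A) is observable, i.e. for every λ ∈ ℂ the (k+1)×k matrix [A − λI; C] has rank k, and suppose −ρ^{-1} is not an eigenvalue of the matrix [[−M^{-1}D, M^{-1}C],[−B, A]]. Define 𝒜 = [[0, 1, 0],[0, −M^{-1}D, M^{-1}C],[0, −B, A]] ∈ ℝ^{(k+2)×(k+2)} and 𝒞 = [1, ρ, 0] ∈ ℝ^{1×(k+2)}. Then the pair (𝒞, 𝒜) is observable: for every λ ∈ ℂ the matrix [𝒜 − λI; 𝒞] has rank k+2. -/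

import Mathlib

open Matrix


lemma aux_rank_iff {m n K : Type*} [Fintype m] [Fintype n] [Field K]
    (P : Matrix m n K) : P.rank = Fintype.card n ↔ Function.Injective P.mulVec := by
  rw [Matrix.mulVec_injective_iff, ← Matrix.rank_transpose,
    Matrix.rank_eq_finrank_span_row, linearIndependent_iff_card_eq_finrank_span, eq_comm]
  rfl

lemma aux_inj {m n K : Type*} [Fintype m] [Fintype n] [Field K]
    (P : Matrix m n K) (h : ∀ v, P.mulVec v = 0 → v = 0) : Function.Injective P.mulVec := by
  have : Function.Injective P.mulVecLin := by
    rw [← LinearMap.ker_eq_bot, LinearMap.ker_eq_bot']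
    exact fun v hv => h v hv
  exact this


/-- PBH observability of the bus realization. If `A ∈ ℝ^{k×k}` is
invertible, `M > 0`, `ρ > 0`, `(C, A)` is observable in the PBH sense, and `−ρ⁻¹` is
not an eigenvalue of `[[−M⁻¹D, M⁻¹C],[−B, A]]`, then the pair `(𝒞, 𝒜)` with
`𝒜 = [[0,1,0],[0,−M⁻¹D,M⁻¹C],[0,−B,A]]` and `𝒞 = [1, ρ, 0]` is observable:
`[𝒜 − λI; 𝒞]` has rank `k+2` for every `λ ∈ ℂ`. -/
theorem pbh_observability_bus_realization {k : ℕ}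
    (A : Matrix (Fin k) (Fin k) ℝ) (B : Matrix (Fin k) (Fin 1) ℝ)
    (C : Matrix (Fin 1) (Fin k) ℝ) (M D ρ : ℝ) (hM : 0 < M) (hρ : 0 < ρ)
    (hA : IsUnit A.det)
    (hobs : ∀ lam : ℂ,
      (Matrix.fromRows (A.map (fun x : ℝ => (x : ℂ)) - lam • 1)
        (C.map (fun x : ℝ => (x : ℂ)))).rank = k)
    (hnotEig :
      ((Matrix.fromBlocks (Matrix.of fun _ _ => -(M⁻¹ * D)) (M⁻¹ • C) (-B) A)
          + ρ⁻¹ • (1 : Matrix (Fin 1 ⊕ Fin k) (Fin 1 ⊕ Fin k) ℝ)).det ≠ 0) :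
    ∀ lam : ℂ,
      (Matrix.fromRows
        ((Matrix.fromBlocks (0 : Matrix (Fin 1) (Fin 1) ℝ)
            (Matrix.fromCols (Matrix.of fun _ _ => (1 : ℝ)) (0 : Matrix (Fin 1) (Fin k) ℝ))
            (0 : Matrix (Fin 1 ⊕ Fin k) (Fin 1) ℝ)
            (Matrix.fromBlocks (Matrix.of fun _ _ => -(M⁻¹ * D)) (M⁻¹ • C) (-B) A)).map
              (fun x : ℝ => (x : ℂ))
          - lam • 1)
        ((Matrix.fromCols (Matrix.of fun _ _ => (1 : ℝ))
            (Matrix.fromCols (Matrix.of fun _ _ => ρ) (0 : Matrix (Fin 1) (Fin k) ℝ))).map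
              (fun x : ℝ => (x : ℂ)))).rank = k + 2 := by

  intro lam
  rw [show k + 2 = Fintype.card (Fin 1 ⊕ (Fin 1 ⊕ Fin k)) by simp; omega]
  rw [aux_rank_iff]
  apply aux_inj
  intro v hv
  have e_theta := congrFun hv (Sum.inl (Sum.inl 0))
  have e_omega := congrFun hv (Sum.inl (Sum.inr (Sum.inl 0)))
  have e_xi := fun j : Fin k => congrFun hv (Sum.inl (Sum.inr (Sum.inr j)))
  have e_out := congrFun hv (Sum.inr 0)
  simp [Matrix.mulVec,
    Matrix.sub_apply, Matrix.smul_apply, Matrix.one_apply, Matrix.map_apply, Matrix.of_apply,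
    dotProduct, Fintype.sum_sum_type, Fin.sum_univ_one, Pi.zero_apply, smul_eq_mul,
    Sum.elim_inl, Sum.elim_inr, Matrix.zero_apply, Matrix.neg_apply, Fin.fin_one_eq_zero,
    sub_mul, ite_mul, zero_mul, mul_ite, mul_one, mul_zero, Finset.sum_sub_distrib,
    Finset.sum_ite_eq, Finset.mem_univ, if_true]
    at e_theta e_omega e_out e_xi
  set x0 : ℂ := v (Sum.inl 0) with hx0
  set x1 : ℂ := v (Sum.inr (Sum.inl 0)) with hx1
  have hfac : x1 * (1 + lam * (ρ : ℂ)) = 0 := by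
    have h1 : x0 = -(ρ : ℂ) * x1 := by linear_combination e_out
    have h2 : x1 = lam * x0 := by linear_combination e_theta
    linear_combination h2 + lam * h1
  by_cases hx1z : x1 = 0
  · have hx0z : x0 = 0 := by
      have h1 : x0 = -(ρ : ℂ) * x1 := by linear_combination e_out
      rw [h1, hx1z]; ring
    set w : Fin k → ℂ := fun j => v (Sum.inr (Sum.inr j)) with hw
    have hMo : (Matrix.fromRows (A.map (fun x : ℝ => (x : ℂ)) - lam • 1)
        (C.map (fun x : ℝ => (x : ℂ)))).mulVec w = 0 := by
      funext i
      rcases i with j | a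
      · have hj := e_xi j
        rw [hx1z] at hj
        simp only [mul_zero, neg_zero, zero_add] at hj
        simp [Matrix.mulVec, dotProduct, Matrix.sub_apply,
          Matrix.map_apply, Matrix.smul_apply, Matrix.one_apply, smul_eq_mul,
          sub_mul, ite_mul, zero_mul, mul_ite, mul_one, mul_zero,
          Finset.sum_sub_distrib, Finset.sum_ite_eq, Finset.mem_univ, if_true]
        linear_combination hj
      · have ha : a = 0 := Fin.fin_one_eq_zero a
        subst ha
        rw [hx1z] at e_omega
        simp only [mul_zero, zero_add] at e_omega
        have hMne : ((M : ℂ))⁻¹ ≠ 0 := by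
          simp [Complex.ofReal_ne_zero, ne_of_gt hM]
        simp [Matrix.mulVec, dotProduct, Matrix.map_apply]
        have hkey : ((M : ℂ))⁻¹ * ∑ x : Fin k, (C 0 x : ℂ) * v (Sum.inr (Sum.inr x)) = 0 := by
          rw [Finset.mul_sum]
          rw [show ∑ x : Fin k, ((M:ℂ))⁻¹ * ((C 0 x : ℂ) * v (Sum.inr (Sum.inr x)))
              = ∑ x : Fin k, ((M:ℂ))⁻¹ * (C 0 x : ℂ) * v (Sum.inr (Sum.inr x)) from
            Finset.sum_congr rfl fun x _ => by ring]
          linear_combination e_omega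
        exact (mul_eq_zero.mp hkey).resolve_left hMne
    have hrank : (Matrix.fromRows (A.map (fun x : ℝ => (x : ℂ)) - lam • 1)
        (C.map (fun x : ℝ => (x : ℂ)))).rank = Fintype.card (Fin k) :=
      (hobs lam).trans (Fintype.card_fin k).symm
    have hinj := (aux_rank_iff _).mp hrank
    have hw0 : w = 0 := hinj (by rw [hMo, Matrix.mulVec_zero])
    funext i
    rcases i with a | (a | j)
    · have : a = 0 := Fin.fin_one_eq_zero a
      subst this; exact hx0z
    · have : a = 0 := Fin.fin_one_eq_zero a
      subst this; exact hx1z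
    · exact congrFun hw0 j
  · exfalso
    have hρC : (ρ : ℂ) ≠ 0 := by simp [Complex.ofReal_ne_zero, ne_of_gt hρ]
    have hlam : lam = -(ρ : ℂ)⁻¹ := by
      have h := (mul_eq_zero.mp hfac).resolve_left hx1z
      have h2 : lam = (-1) / (ρ : ℂ) := by
        rw [eq_div_iff hρC]; linear_combination h
      rw [h2]; ring
    set Ablk : Matrix (Fin 1 ⊕ Fin k) (Fin 1 ⊕ Fin k) ℝ :=
      (Matrix.fromBlocks (Matrix.of fun _ _ => -(M⁻¹ * D)) (M⁻¹ • C) (-B) A) with hAblk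
    set P : Matrix (Fin 1 ⊕ Fin k) (Fin 1 ⊕ Fin k) ℂ :=
      (Ablk + ρ⁻¹ • (1 : Matrix (Fin 1 ⊕ Fin k) (Fin 1 ⊕ Fin k) ℝ)).map
        (fun x : ℝ => (x : ℂ)) with hP
    have hdetP : P.det ≠ 0 := by
      have h1 := (RingHom.map_det Complex.ofRealHom
        (Ablk + ρ⁻¹ • (1 : Matrix (Fin 1 ⊕ Fin k) (Fin 1 ⊕ Fin k) ℝ))).symm
      rw [RingHom.mapMatrix_apply] at h1
      rw [hP, show (fun x : ℝ => (x : ℂ)) = ⇑Complex.ofRealHom from rfl, h1]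
      simpa using hnotEig
    have hinjP : Function.Injective P.mulVec :=
      Matrix.mulVec_injective_iff_isUnit.mpr
        ((Matrix.isUnit_iff_isUnit_det P).mpr (isUnit_iff_ne_zero.mpr hdetP))
    set y : Fin 1 ⊕ Fin k → ℂ := Sum.elim (fun _ => x1) (fun j => v (Sum.inr (Sum.inr j)))
      with hy
    have hPy : P.mulVec y = 0 := by
      funext i
      rw [hlam] at e_omega e_xi
      rcases i with a | j
      · have ha : a = 0 := Fin.fin_one_eq_zero a
        subst ha
        simp [hP, hAblk, hy, Matrix.mulVec, dotProduct, Fintype.sum_sum_type,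
          Fin.sum_univ_one, Matrix.map_apply, Matrix.add_apply,
          Matrix.of_apply, Sum.elim_inl, Sum.elim_inr, Matrix.smul_apply, Matrix.one_apply,
          smul_eq_mul, Matrix.neg_apply, apply_ite Complex.ofReal, push_cast,
          add_mul, ite_mul, zero_mul, mul_ite, mul_one, mul_zero,
          Finset.sum_add_distrib, Finset.sum_ite_eq, Finset.mem_univ, if_true]
        push_cast
        linear_combination e_omega
      · simp [hP, hAblk, hy, Matrix.mulVec, dotProduct, Fintype.sum_sum_type,
          Fin.sum_univ_one, Matrix.map_apply, Matrix.add_apply,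
          Matrix.of_apply, Sum.elim_inl, Sum.elim_inr, Matrix.smul_apply, Matrix.one_apply,
          smul_eq_mul, Matrix.neg_apply, apply_ite Complex.ofReal,
          add_mul, ite_mul, zero_mul, mul_ite, mul_one, mul_zero,
          Finset.sum_add_distrib, Finset.sum_ite_eq, Finset.mem_univ, if_true]
        push_cast
        linear_combination e_xi j
    have hy0 : y = 0 := hinjP (by rw [hPy, Matrix.mulVec_zero])
    exact hx1z (congrFun hy0 (Sum.inl 0))
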